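/- For each n ≥ 1, the n-th cross-effect functor cr_n: Func(C, D) → Func(C^n, D) is exact, i.e. it takes short exact sequences of functors (pointwise in an abelian category D) to short exact sequences. -/

import Mathlib

open CategoryTheory CategoryTheory.Limits

universe u v w

variable {C : Type u} [Category.{v} C] [HasZeroMorphisms C] [HasFiniteCoproducts C]

/-- The retraction `r_k : X₁ ∨ ⋯ ∨ X_n → X₁ ∨ ⋯ ∨ X̂_k ∨ ⋯ ∨ X_n` killing the
`k`-th summand. -/
noncomputable def rhat {ι : Type} [Fintype ι] [DecidableEq ι] (X : ι → C) (k : ι) :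
    (∐ X) ⟶ ∐ (fun i : {i : ι // i ≠ k} => X i.1) :=
  Sigma.desc (fun i =>
    if h : i = k then 0 else Sigma.ι (fun i : {i : ι // i ≠ k} => X i.1) ⟨i, h⟩)

/-- The cross-effect `cr F (X₁,…,X_n)` as a subgroup of `F(X₁ ∨ ⋯ ∨ X_n)`. -/
noncomputable def crSub (F : C ⥤ AddCommGrpCat.{w}) {ι : Type} [Fintype ι]
    [DecidableEq ι] (X : ι → C) : AddSubgroup (F.obj (∐ X)) :=
  ⨅ k : ι, AddMonoidHom.ker (F.map (rhat X k)).hom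

noncomputable def piS {ι : Type} [Fintype ι] [DecidableEq ι] (X : ι → C) (S : Finset ι) :
    (∐ X) ⟶ (∐ X) :=
  Sigma.desc (fun i => if i ∈ S then Sigma.ι X i else 0)

lemma piS_univ {ι : Type} [Fintype ι] [DecidableEq ι] (X : ι → C) :
    piS X Finset.univ = 𝟙 (∐ X) := by
  apply Sigma.hom_ext
  intro i
  simp [piS]

lemma piS_comp_rhat {ι : Type} [Fintype ι] [DecidableEq ι] (X : ι → C) (S : Finset ι) (k : ι) :
    piS X S ≫ rhat X k = piS X (S.erase k) ≫ rhat X k := by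
  apply Sigma.hom_ext
  intro i
  simp only [piS, rhat, colimit.ι_desc_assoc, Discrete.functor_obj, Cofan.mk_pt, Cofan.mk_ι_app]
  by_cases hik : i = k
  · subst hik
    by_cases hiS : i ∈ S <;> simp [hiS]
  · by_cases hiS : i ∈ S <;> simp [hiS, hik]

lemma piS_factor {ι : Type} [Fintype ι] [DecidableEq ι] (X : ι → C) (S : Finset ι) (k : ι)
    (hk : k ∉ S) :
    piS X S = rhat X k ≫
      Sigma.desc (fun i : {i : ι // i ≠ k} => if i.1 ∈ S then Sigma.ι X i.1 else 0) := by
  apply Sigma.hom_ext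
  intro i
  simp only [piS, rhat, colimit.ι_desc_assoc, Discrete.functor_obj, Cofan.mk_pt, Cofan.mk_ι_app,
    colimit.ι_desc]
  by_cases hik : i = k
  · subst hik
    simp [Finset.notMem_erase, hk]
  · simp [hik]

noncomputable def pproj (F : C ⥤ AddCommGrpCat.{w}) {ι : Type} [Fintype ι] [DecidableEq ι]
    (X : ι → C) (x : F.obj (∐ X)) : F.obj (∐ X) :=
  ∑ S : Finset ι, ((-1 : ℤ) ^ (Fintype.card ι - S.card)) • (F.map (piS X S)) x

lemma elementwise_naturality {F G : C ⥤ AddCommGrpCat.{w}} (φ : F ⟶ G) {A B : C} (f : A ⟶ B)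
    (x : F.obj A) : φ.app B (F.map f x) = G.map f (φ.app A x) :=
  congrArg (fun (h : F.obj A ⟶ G.obj B) => h x) (φ.naturality f)

lemma pproj_natural {F G : C ⥤ AddCommGrpCat.{w}} (φ : F ⟶ G) {ι : Type} [Fintype ι]
    [DecidableEq ι] (X : ι → C) (x : F.obj (∐ X)) :
    φ.app (∐ X) (pproj F X x) = pproj G X (φ.app (∐ X) x) := by
  unfold pproj
  rw [map_sum]
  refine Finset.sum_congr rfl fun S _ => ?_
  rw [map_zsmul, elementwise_naturality]

lemma mem_crSub_iff (F : C ⥤ AddCommGrpCat.{w}) {ι : Type} [Fintype ι] [DecidableEq ι]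
    (X : ι → C) (x : F.obj (∐ X)) :
    x ∈ crSub F X ↔ ∀ k : ι, F.map (rhat X k) x = 0 := by
  simp [crSub, AddSubgroup.mem_iInf, AddMonoidHom.mem_ker]

lemma pproj_fix (F : C ⥤ AddCommGrpCat.{w}) {ι : Type} [Fintype ι] [DecidableEq ι]
    (X : ι → C) (x : F.obj (∐ X)) (hx : x ∈ crSub F X) : pproj F X x = x := by
  rw [mem_crSub_iff] at hx
  unfold pproj
  rw [Finset.sum_eq_single Finset.univ]
  · simp [piS_univ]
  · intro S _ hS
    obtain ⟨k, hk⟩ : ∃ k, k ∉ S := by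
      by_contra h
      push_neg at h
      exact hS (Finset.eq_univ_iff_forall.2 h)
    rw [piS_factor X S k hk, F.map_comp]
    simp only [ConcreteCategory.comp_apply, hx k]
    simp
  · simp

lemma pproj_mem (F : C ⥤ AddCommGrpCat.{w}) {ι : Type} [Fintype ι] [DecidableEq ι]
    (X : ι → C) (x : F.obj (∐ X)) : pproj F X x ∈ crSub F X := by
  rw [mem_crSub_iff]
  intro k
  unfold pproj
  rw [map_sum]
  have key : ∀ S : Finset ι,
      F.map (rhat X k) (F.map (piS X S) x) = F.map (piS X (S.erase k) ≫ rhat X k) x := by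
    intro S
    rw [← piS_comp_rhat, F.map_comp]
    simp
  refine Finset.sum_ninvolution
    (fun S => if k ∈ S then S.erase k else insert k S) ?_ ?_ (fun _ => Finset.mem_univ _) ?_
  · intro S
    by_cases hk : k ∈ S
    · simp only [hk, if_pos, map_zsmul, key, Finset.erase_idem]
      have hle : S.card ≤ Fintype.card ι := Finset.card_le_univ S
      have h1 : 1 ≤ S.card := Finset.card_pos.2 ⟨k, hk⟩
      have hc : (S.erase k).card = S.card - 1 := Finset.card_erase_of_mem hk
      have : Fintype.card ι - (S.erase k).card = (Fintype.card ι - S.card) + 1 := by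
        omega
      rw [this, pow_succ]
      push_cast
      rw [mul_neg_one, neg_smul, add_neg_cancel]
    · simp only [hk, if_neg, not_false_iff, map_zsmul, key]
      have h1 : (insert k S).erase k = S.erase k := by
        rw [Finset.erase_insert_eq_erase]
      rw [h1]
      have hk' : k ∈ insert k S := Finset.mem_insert_self k S
      have hne : S ≠ Finset.univ := by
        intro h
        subst h
        exact hk (Finset.mem_univ k)
      have hlt : S.card < Fintype.card ι := by
        have h2 := Finset.card_lt_card (Finset.ssubset_univ_iff.2 hne)
        simpa using h2
      have hcard : (insert k S).card = S.card + 1 := Finset.card_insert_of_notMem hk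
      have : Fintype.card ι - S.card = (Fintype.card ι - (insert k S).card) + 1 := by
        omega
      rw [this, pow_succ]
      push_cast
      rw [mul_neg_one, neg_smul, neg_add_cancel]
  · intro S _
    by_cases hk : k ∈ S
    · simp only [hk, if_pos]
      intro h
      exact Finset.notMem_erase k S (h.symm ▸ hk)
    · simp only [hk, if_neg, not_false_iff]
      intro h
      exact hk (h ▸ Finset.mem_insert_self k S)
  · intro S
    by_cases hk : k ∈ S
    · simp [hk, Finset.notMem_erase, Finset.insert_erase hk]
    · simp [hk, Finset.erase_insert hk]

/-- The `n`-th cross-effect functor is exact: a short exact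
sequence `0 → F → G → H → 0` of functors `C → Ab` (pointwise short exact)
induces, for every `n`-tuple `X` of objects, a short exact sequence
`0 → cr_n F(X) → cr_n G(X) → cr_n H(X) → 0` (the natural transformations
restrict to the cross-effects, and the restricted sequence is again short
exact). -/
theorem cross_effect_exact
    (F G H : C ⥤ AddCommGrpCat.{w}) (φ : F ⟶ G) (ψ : G ⟶ H)
    (hinj : ∀ Z : C, Function.Injective (φ.app Z))
    (hexact : ∀ Z : C, Function.Exact (φ.app Z) (ψ.app Z))
    (hsurj : ∀ Z : C, Function.Surjective (ψ.app Z))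
    (n : ℕ) (hn : 1 ≤ n) (X : Fin n → C) :
    (∀ x ∈ crSub F X, φ.app (∐ X) x ∈ crSub G X) ∧
    (∀ y ∈ crSub G X, ψ.app (∐ X) y ∈ crSub H X) ∧
    (∀ x ∈ crSub F X, φ.app (∐ X) x = 0 → x = 0) ∧
    (∀ y ∈ crSub G X, ψ.app (∐ X) y = 0 →
      ∃ x ∈ crSub F X, φ.app (∐ X) x = y) ∧
    (∀ z ∈ crSub H X, ∃ y ∈ crSub G X, ψ.app (∐ X) y = z) := by
  refine ⟨?_, ?_, ?_, ?_, ?_⟩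
  · intro x hx
    rw [mem_crSub_iff] at hx ⊢
    intro k
    rw [← elementwise_naturality φ (rhat X k) x, hx k, map_zero]
  · intro y hy
    rw [mem_crSub_iff] at hy ⊢
    intro k
    rw [← elementwise_naturality ψ (rhat X k) y, hy k, map_zero]
  · intro x _ h0
    exact hinj (∐ X) (by rw [h0, map_zero])
  · intro y hy h0
    obtain ⟨x, hx⟩ := (hexact (∐ X) y).1 h0
    refine ⟨pproj F X x, pproj_mem F X x, ?_⟩
    rw [pproj_natural, hx, pproj_fix G X y hy]
  · intro z hz
    obtain ⟨y, hy⟩ := hsurj (∐ X) z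
    exact ⟨pproj G X y, pproj_mem G X y, by rw [pproj_natural, hy, pproj_fix H X z hz]⟩
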